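/- Interpolation step: Let F be a field, A = ((x_0,y_0),…,(x_{n−1},y_{n−1})) a list of n points of F×F, M_x, M_y ∈ F[X,Y]^{r×r} matrices of polynomials, and for each i ∈ {0,…,w−1} and each point (x,y) of A let H_{i,(x,y)} ∈ F^{r×s} be a matrix and c_{(x,y)} ∈ F^s a vector. Let d1 ≥ t and d2 ≥ k be integers with w(d1−t+1)(d2−k+1) > nr. Then there exist polynomials Q_0,…,Q_{w−1} ∈ F[X,Y], not all zero, with deg_X Q_i ≤ d1−t and deg_Y Q_i ≤ d2−k for all i, such that for every point (x,y) of A: Σ_{i=0}^{w−1} (Q_i(M_x,M_y) evaluated entrywise at (x,y)) · H_{i,(x,y)} · c_{(x,y)} = 0 in F^r. -/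
import Mathlib

open MvPolynomial

noncomputable section

/-- `q(Mx, My)`: the matrix obtained from `q ∈ F[X,Y]` by substituting each
monomial `X^a Y^b` (with its coefficient) by `Mx^a · My^b`. -/
def matSubst (F : Type) [Field F] {r : ℕ} (q : MvPolynomial (Fin 2) F)
    (Mx My : Matrix (Fin r) (Fin r) (MvPolynomial (Fin 2) F)) :
    Matrix (Fin r) (Fin r) (MvPolynomial (Fin 2) F) :=
  ∑ m ∈ q.support, MvPolynomial.coeff m q • (Mx ^ (m 0) * My ^ (m 1))

/-- exponent Finsupp for `X^a Y^b` -/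
def mexp (a b : ℕ) : Fin 2 →₀ ℕ := Finsupp.single 0 a + Finsupp.single 1 b

@[simp] lemma mexp_apply0 (a b : ℕ) : mexp a b 0 = a := by
  simp [mexp, Finsupp.single_apply]

@[simp] lemma mexp_apply1 (a b : ℕ) : mexp a b 1 = b := by
  simp [mexp, Finsupp.single_apply]

lemma mexp_inj {a b a' b' : ℕ} (h : mexp a b = mexp a' b') : a = a' ∧ b = b' :=
  ⟨by simpa using DFunLike.congr_fun h 0, by simpa using DFunLike.congr_fun h 1⟩

variable {F : Type} [Field F]

/-- The candidate polynomial built from a coefficient vector. -/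
def Qv {w D1 D2 : ℕ} (v : Fin w × (Fin (D1+1) × Fin (D2+1)) → F) (i : Fin w) :
    MvPolynomial (Fin 2) F :=
  ∑ p : Fin (D1+1) × Fin (D2+1), monomial (mexp p.1 p.2) (v (i, p))

lemma coeff_Qv {w D1 D2 : ℕ} (v : Fin w × (Fin (D1+1) × Fin (D2+1)) → F) (i : Fin w)
    (p : Fin (D1+1) × Fin (D2+1)) :
    coeff (mexp p.1 p.2) (Qv v i) = v (i, p) := by
  rw [Qv, coeff_sum]
  rw [Finset.sum_eq_single p]
  · simp [coeff_monomial]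
  · intro q _ hq
    rw [coeff_monomial, if_neg]
    intro h
    obtain ⟨h1, h2⟩ := mexp_inj h
    exact hq (Prod.ext (Fin.ext h1) (Fin.ext h2))
  · simp

lemma support_Qv {w D1 D2 : ℕ} (v : Fin w × (Fin (D1+1) × Fin (D2+1)) → F) (i : Fin w)
    {m : Fin 2 →₀ ℕ} (hm : m ∈ (Qv v i).support) :
    ∃ p : Fin (D1+1) × Fin (D2+1), m = mexp p.1 p.2 := by
  have := MvPolynomial.support_sum hm
  obtain ⟨p, _, hp⟩ := Finset.mem_biUnion.mp this
  refine ⟨p, ?_⟩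
  classical
  rw [support_monomial] at hp
  split_ifs at hp with h
  · simp at hp
  · simpa using hp

lemma matSubst_eq_sum_of_subset {r : ℕ} (q : MvPolynomial (Fin 2) F)
    (Mx My : Matrix (Fin r) (Fin r) (MvPolynomial (Fin 2) F)) {s : Finset (Fin 2 →₀ ℕ)}
    (h : q.support ⊆ s) :
    matSubst F q Mx My = ∑ m ∈ s, MvPolynomial.coeff m q • (Mx ^ (m 0) * My ^ (m 1)) := by
  unfold matSubst
  exact Finset.sum_subset h (fun m _ hm => by
    rw [MvPolynomial.notMem_support_iff.mp hm, zero_smul])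

lemma matSubst_Qv {r w D1 D2 : ℕ} (v : Fin w × (Fin (D1+1) × Fin (D2+1)) → F) (i : Fin w)
    (Mx My : Matrix (Fin r) (Fin r) (MvPolynomial (Fin 2) F)) :
    matSubst F (Qv v i) Mx My
      = ∑ p : Fin (D1+1) × Fin (D2+1), v (i, p) • (Mx ^ (p.1 : ℕ) * My ^ (p.2 : ℕ)) := by
  rw [matSubst_eq_sum_of_subset (Qv v i) Mx My
    (s := Finset.univ.image fun p : Fin (D1+1) × Fin (D2+1) => mexp p.1 p.2)
    (by intro m hm; obtain ⟨p, hp⟩ := support_Qv v i hm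
        exact Finset.mem_image.mpr ⟨p, Finset.mem_univ _, hp.symm⟩)]
  rw [Finset.sum_image (by
    intro p _ q _ h
    obtain ⟨h1, h2⟩ := mexp_inj h
    exact Prod.ext (Fin.ext h1) (Fin.ext h2))]
  apply Finset.sum_congr rfl
  intro p _
  rw [mexp_apply0, mexp_apply1, coeff_Qv]

/-- Interpolation step: there exist polynomials `Q_0,…,Q_{w-1}`, not all zero, with
`deg_X Q_i ≤ d1 - t`, `deg_Y Q_i ≤ d2 - k`, satisfying the `r` homogeneous linear
constraints at each of the `n` evaluation points. -/
theorem interpolation_step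
    {F : Type} [Field F] {n r s w t k d1 d2 : ℕ}
    (A : Fin n → F × F)
    (Mx My : Matrix (Fin r) (Fin r) (MvPolynomial (Fin 2) F))
    (H : Fin w → Fin n → Matrix (Fin r) (Fin s) F)
    (c : Fin n → Fin s → F)
    (hd1 : t ≤ d1) (hd2 : k ≤ d2)
    (hcount : n * r < w * (d1 - t + 1) * (d2 - k + 1)) :
    ∃ Q : Fin w → MvPolynomial (Fin 2) F,
      Q ≠ 0 ∧
      (∀ i : Fin w, (Q i).degreeOf 0 ≤ d1 - t ∧ (Q i).degreeOf 1 ≤ d2 - k) ∧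
      ∀ m : Fin n,
        (∑ i : Fin w,
          (((matSubst F (Q i) Mx My).map (eval ![(A m).1, (A m).2])) * H i m).mulVec
            (c m)) = 0 := by
  classical
  set D1 := d1 - t with hD1
  set D2 := d2 - k with hD2
  -- the scalar constants
  set Kc : Fin w → (Fin (D1+1) × Fin (D2+1)) → Fin n → Fin r → F := fun i p m j =>
    ∑ l, (∑ q, eval ![(A m).1, (A m).2] ((Mx ^ (p.1 : ℕ) * My ^ (p.2 : ℕ)) j q) * H i m q l)
      * c m l with hKc
  -- the linear map
  set L : ((Fin w × (Fin (D1+1) × Fin (D2+1))) → F) →ₗ[F] ((Fin n × Fin r) → F) :=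
    { toFun := fun v mj => ∑ i, ∑ p, v (i, p) * Kc i p mj.1 mj.2
      map_add' := by
        intro u v; funext mj
        simp [add_mul, Finset.sum_add_distrib]
      map_smul' := by
        intro a v; funext mj
        simp [Finset.mul_sum, mul_assoc] } with hL
  -- bridge: the constraint equals L applied componentwise
  have hbridge : ∀ (v : Fin w × (Fin (D1+1) × Fin (D2+1)) → F) (m : Fin n),
      (∑ i : Fin w,
        (((matSubst F (Qv v i) Mx My).map (eval ![(A m).1, (A m).2])) * H i m).mulVec (c m))
      = fun j => ∑ i, ∑ p, v (i, p) * Kc i p m j := by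
    intro v m
    funext j
    simp only [Finset.sum_apply, Matrix.mulVec, Matrix.mul_apply, dotProduct,
      Matrix.map_apply, matSubst_Qv, Matrix.sum_apply, Matrix.smul_apply, map_sum,
      smul_eval, hKc]
    apply Finset.sum_congr rfl
    intro i _
    simp only [Finset.sum_mul, Finset.mul_sum]
    conv_lhs => enter [2, l]; rw [Finset.sum_comm]
    rw [Finset.sum_comm]
    refine Finset.sum_congr rfl fun p _ => Finset.sum_congr rfl fun l _ =>
      Finset.sum_congr rfl fun q _ => Finset.sum_congr rfl fun q' _ => by ring
  -- L is not injective by dimension count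
  have hninj : ¬ Function.Injective L := by
    intro hinj
    have h1 := LinearMap.finrank_le_finrank_of_injective hinj
    simp only [Module.finrank_pi, Fintype.card_prod, Fintype.card_fin] at h1
    have h2 : w * (D1+1) * (D2+1) ≤ n * r := by rw [mul_assoc]; exact h1
    exact absurd hcount (not_lt.mpr h2)
  rw [Function.not_injective_iff] at hninj
  obtain ⟨u, u', huu', hne⟩ := hninj
  set v : Fin w × (Fin (D1+1) × Fin (D2+1)) → F := u - u' with hv
  have hv0 : v ≠ 0 := sub_ne_zero.mpr hne
  have hLv : L v = 0 := by rw [map_sub, huu', sub_self]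
  refine ⟨Qv v, ?_, ?_, ?_⟩
  · -- not all zero
    intro hQ
    apply hv0
    funext ip
    obtain ⟨i, p⟩ := ip
    have := coeff_Qv v i p
    rw [show Qv v i = 0 from congrFun hQ i] at this
    simp at this
    simp [← this]
  · -- degree bounds
    intro i
    constructor
    · rw [degreeOf_le_iff]
      intro m hm
      obtain ⟨p, hp⟩ := support_Qv v i hm
      rw [hp, mexp_apply0]
      exact Nat.lt_succ_iff.mp p.1.isLt
    · rw [degreeOf_le_iff]
      intro m hm
      obtain ⟨p, hp⟩ := support_Qv v i hm
      rw [hp, mexp_apply1]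
      exact Nat.lt_succ_iff.mp p.2.isLt
  · -- constraints
    intro m
    rw [hbridge v m]
    funext j
    exact congrFun hLv (m, j)

end
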